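/- Let a, b be positive integers, g = gcd(a,b), and d = a + b. Then for every integer j with 1 ≤ j ≤ d, one has ⌈j·a/d⌉ + ⌈j·b/d⌉ = j + 1 if (d/g) does not divide j, and ⌈j·a/d⌉ + ⌈j·b/d⌉ = j if (d/g) divides j. -/

import Mathlib

theorem ceil_add_ceil_general (a b : ℤ) (ha : 0 < a) (hb : 0 < b)
    (g : ℤ) (hg : g = Int.gcd a b) (d : ℤ) (hd : d = a + b) :
    ∀ j : ℤ, 1 ≤ j → j ≤ d →
      (¬ (d / g ∣ j) → ⌈(j * a : ℚ) / d⌉ + ⌈(j * b : ℚ) / d⌉ = j + 1) ∧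
      ((d / g ∣ j) → ⌈(j * a : ℚ) / d⌉ + ⌈(j * b : ℚ) / d⌉ = j) := by
  intro j hj1 hjd
  have hd0 : (0:ℤ) < d := by omega
  have hdq : (d:ℚ) ≠ 0 := by exact_mod_cast hd0.ne'
  have hg0 : 0 < g := by
    rw [hg]
    exact_mod_cast Int.gcd_pos_of_ne_zero_left b ha.ne'
  have hga : g ∣ a := hg ▸ Int.gcd_dvd_left a b
  have hgb : g ∣ b := hg ▸ Int.gcd_dvd_right a b
  have hgd : g ∣ d := hd ▸ dvd_add hga hgb
  have hcop0 : IsCoprime (a / g) (b / g) := by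
    rw [Int.isCoprime_iff_gcd_eq_one]
    have h := Int.gcd_div_gcd_div_gcd (i := a) (j := b)
      (by exact_mod_cast (by exact_mod_cast hg0.trans_le hg.le : (0:ℤ) < Int.gcd a b))
    rwa [← hg] at h
  have hdg : d / g = a / g + b / g := by
    rw [hd, Int.add_ediv_of_dvd_left hga]
  have hcop : IsCoprime (d / g) (a / g) := by
    rw [hdg]
    have := (hcop0.add_mul_right_right 1).symm
    rwa [show b / g + 1 * (a / g) = a / g + b / g by ring] at this
  have key : d ∣ j * a ↔ d / g ∣ j := by
    have hdd : g * (d / g) = d := Int.mul_ediv_cancel' hgd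
    have haa : g * (a / g) = a := Int.mul_ediv_cancel' hga
    constructor
    · intro h
      have h' : g * (d / g) ∣ g * (j * (a / g)) := by
        rw [hdd, show g * (j * (a / g)) = j * (g * (a / g)) by ring, haa]; exact h
      have h2 : d / g ∣ j * (a / g) := (mul_dvd_mul_iff_left hg0.ne').mp h'
      exact hcop.dvd_of_dvd_mul_right h2
    · intro ⟨k, hk⟩
      refine ⟨k * (a / g), ?_⟩
      calc j * a = (d / g * k) * (g * (a / g)) := by rw [← hk, haa]
        _ = (g * (d / g)) * (k * (a / g)) := by ring
        _ = d * (k * (a / g)) := by rw [hdd]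
  set x : ℚ := (j * a : ℚ) / d with hx
  have hyx : ((j : ℚ) * b) / d = (j : ℚ) - x := by
    rw [hx, eq_sub_iff_add_eq, ← add_div, div_eq_iff hdq]
    push_cast [hd]
    ring
  have hsum : ⌈(j * b : ℚ) / d⌉ = j - ⌊x⌋ := by
    rw [hyx, show (j : ℚ) - x = -x + j by ring, Int.ceil_add_intCast, Int.ceil_neg]
    ring
  have hfract : Int.fract x = 0 ↔ d ∣ j * a := by
    constructor
    · intro h
      obtain ⟨z, hz⟩ := (Int.fract_eq_iff.mp h).2.2
      rw [sub_zero] at hz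
      have hq : (j * a : ℚ) = d * z := by
        rw [← hz, hx]; field_simp
      exact ⟨z, by exact_mod_cast hq⟩
    · intro ⟨z, hz⟩
      have hxz : x = (z : ℚ) := by
        rw [hx, div_eq_iff hdq]
        exact_mod_cast hz.trans (mul_comm d z)
      rw [hxz]; exact Int.fract_intCast z
  constructor
  · intro hnd
    have hf : Int.fract x ≠ 0 := fun h => hnd (key.mp (hfract.mp h))
    have hceil : ⌈x⌉ = ⌊x⌋ + 1 := by
      have h1 : (⌈x⌉ : ℚ) = x + 1 - Int.fract x := Int.ceil_eq_add_one_sub_fract hf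
      have h2 : (⌊x⌋ : ℚ) = x - Int.fract x := by rw [Int.self_sub_fract]
      have h3 : (⌈x⌉ : ℚ) = (⌊x⌋ : ℚ) + 1 := by rw [h1, h2]; ring
      exact_mod_cast h3
    rw [hceil, hsum]
    ring
  · intro hdvd
    have hf : Int.fract x = 0 := hfract.mpr (key.mpr hdvd)
    have hxi : x = (⌊x⌋ : ℚ) := by
      have h := Int.self_sub_fract x
      rw [hf, sub_zero] at h
      exact h
    have hceil : ⌈x⌉ = ⌊x⌋ := by
      have h := Int.ceil_intCast (R := ℚ) ⌊x⌋
      rwa [← hxi] at h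
    rw [hceil, hsum]
    ring
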